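/- arXiv:1902.03999 — 2 statements merged into one kernel-verified Lean document; each statement's English description precedes it below -/
import Mathlib

section
/- Let n be a positive integer, K an n×n real symmetric positive semidefinite matrix, λ > 0, and g, h ∈ ℝⁿ with h_i > 0 for all i. Let D = diag(√h_1, …, √h_n) and ỹ ∈ ℝⁿ with ỹ_i = −g_i / h_i. Then the vector α* = D (D K D + λ I_n)⁻¹ D ỹ is a global minimizer over α ∈ ℝⁿ of the penalized second-order boosting objective Q(α) = Σ_{i=1}^n [ g_i (Kα)_i + (1/2) h_i (Kα)_i² ] + (1/2) λ αᵀ K α; that is, Q(α*) ≤ Q(β) for all β ∈ ℝⁿ. -/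
open Matrix BigOperators

/-- Proposition 1 (KTBoost): the vector `α* = D (D K D + λ I)⁻¹ D ỹ` globally minimizes
the penalized second-order boosting objective
`Q(α) = ∑ᵢ [gᵢ (Kα)ᵢ + (1/2) hᵢ (Kα)ᵢ²] + (1/2) λ αᵀ K α`. -/
theorem ktboost_newton_kernel_update (n : ℕ) (hn : 0 < n)
    (K : Matrix (Fin n) (Fin n) ℝ) (hK : K.PosSemidef)
    (lam : ℝ) (hlam : 0 < lam)
    (g h : Fin n → ℝ) (hh : ∀ i, 0 < h i)
    (D : Matrix (Fin n) (Fin n) ℝ) (hD : D = Matrix.diagonal fun i => Real.sqrt (h i))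
    (ytil : Fin n → ℝ) (hy : ∀ i, ytil i = -g i / h i)
    (Q : (Fin n → ℝ) → ℝ)
    (hQ : ∀ α, Q α =
      (∑ i, (g i * (K.mulVec α) i + (1 / 2) * h i * (K.mulVec α) i ^ 2))
        + (1 / 2) * lam * (α ⬝ᵥ K.mulVec α))
    (αstar : Fin n → ℝ)
    (hα : αstar = D.mulVec
      ((D * K * D + lam • (1 : Matrix (Fin n) (Fin n) ℝ))⁻¹.mulVec (D.mulVec ytil))) :
    ∀ β : Fin n → ℝ, Q αstar ≤ Q β := by
  set A : Matrix (Fin n) (Fin n) ℝ := D * K * D + lam • (1 : Matrix (Fin n) (Fin n) ℝ) with hAdef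
  -- D is symmetric (real diagonal)
  have hDsym : Dᴴ = D := by
    simp [hD, Matrix.diagonal_conjTranspose]
  -- D * D = diagonal h
  have hDD : D * D = Matrix.diagonal h := by
    rw [hD, Matrix.diagonal_mul_diagonal]
    have : (fun i => Real.sqrt (h i) * Real.sqrt (h i)) = h :=
      funext fun i => Real.mul_self_sqrt (hh i).le
    rw [this]
  -- A is positive definite
  have hApos : A.PosDef := by
    have h1 : (D * K * D).PosSemidef := by
      have := hK.mul_mul_conjTranspose_same D
      rwa [hDsym] at this
    have h2 : (lam • (1 : Matrix (Fin n) (Fin n) ℝ)).PosDef := by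
      have he : lam • (1 : Matrix (Fin n) (Fin n) ℝ) = Matrix.diagonal (fun _ => lam) := by
        ext i j
        by_cases hij : i = j <;> simp [Matrix.diagonal, Matrix.one_apply, hij]
      rw [he]
      exact Matrix.PosDef.diagonal (fun _ => hlam)
    exact Matrix.PosDef.posSemidef_add h1 h2
  have hAunit : IsUnit A.det := hApos.det_pos.ne'.isUnit
  -- key matrix identity: (diag h * K + lam • 1) * D = D * A
  have hcomm : (Matrix.diagonal h * K + lam • (1 : Matrix (Fin n) (Fin n) ℝ)) * D = D * A := by
    rw [hAdef, add_mul, mul_add, ← hDD, Matrix.smul_mul, Matrix.one_mul, Matrix.mul_smul,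
      Matrix.mul_one]
    noncomm_ring
  -- key: (diag h * K + lam • 1) α* = diag h ỹ = -g
  have hkey : (Matrix.diagonal h * K + lam • (1 : Matrix (Fin n) (Fin n) ℝ)).mulVec αstar
      = fun i => - g i := by
    rw [hα, Matrix.mulVec_mulVec, Matrix.mulVec_mulVec, Matrix.mulVec_mulVec, hcomm,
      Matrix.mul_assoc D A A⁻¹, Matrix.mul_nonsing_inv _ hAunit, Matrix.mul_one, hDD]
    funext i
    simp only [Matrix.mulVec_diagonal, hy i]
    rw [← mul_div_assoc, mul_div_cancel_left₀ _ (hh i).ne']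
  -- componentwise stationarity
  have hstat : ∀ i, g i + h i * (K.mulVec αstar) i + lam * αstar i = 0 := by
    intro i
    have hi := congrFun hkey i
    simp only [Matrix.add_mulVec, ← Matrix.mulVec_mulVec, Matrix.smul_mulVec,
      Matrix.one_mulVec, Pi.add_apply, Pi.smul_apply, smul_eq_mul,
      Matrix.mulVec_diagonal] at hi
    linarith
  -- K is symmetric
  have hKT : Kᵀ = K := by
    ext i j
    conv_rhs => rw [← hK.isHermitian]
    simp [Matrix.transpose_apply, Matrix.conjTranspose_apply]
  have hsymK : ∀ x y : Fin n → ℝ, x ⬝ᵥ K.mulVec y = y ⬝ᵥ K.mulVec x := by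
    intro x y
    rw [Matrix.dotProduct_mulVec, ← Matrix.mulVec_transpose, hKT, dotProduct_comm]
  intro β
  set v : Fin n → ℝ := β - αstar with hv
  have hβ : β = αstar + v := by simp [hv]
  set u : Fin n → ℝ := K.mulVec αstar with hu
  set w : Fin n → ℝ := K.mulVec v with hw
  have hKv : K.mulVec β = fun i => u i + w i := by
    funext i
    rw [hβ, Matrix.mulVec_add]
    rfl
  -- pointwise algebraic identity
  have pointwise : ∀ i : Fin n,
      (g i * (u i + w i) + (1 / 2) * h i * (u i + w i) ^ 2)
        + (1 / 2) * lam * ((αstar i + v i) * (u i + w i))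
      = ((g i * u i + (1 / 2) * h i * u i ^ 2) + (1 / 2) * lam * (αstar i * u i))
        + (((1 / 2) * h i * w i ^ 2) + (1 / 2) * lam * (v i * w i))
        + (w i * (g i + h i * u i + lam * αstar i))
        + (1 / 2) * lam * (v i * u i - αstar i * w i) := by
    intro i; ring
  have Szero : ∑ i, w i * (g i + h i * u i + lam * αstar i) = 0 :=
    Finset.sum_eq_zero (fun i _ => by rw [hstat i, mul_zero])
  have hsw : ∑ i, (v i * u i - αstar i * w i) = 0 := by
    have h1 : ∑ i, v i * u i = ∑ i, αstar i * w i := by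
      have := hsymK v αstar
      simpa [dotProduct] using this
    rw [Finset.sum_sub_distrib, h1, sub_self]
  have hvw : (0 : ℝ) ≤ ∑ i, v i * w i := by
    have := hK.dotProduct_mulVec_nonneg v
    simpa [dotProduct] using this
  have hsum : (0 : ℝ) ≤ ∑ i, (1 / 2) * h i * w i ^ 2 :=
    Finset.sum_nonneg (fun i _ =>
      mul_nonneg (mul_nonneg (by norm_num) (hh i).le) (sq_nonneg _))
  -- main expansion
  have main :
      (∑ i, (g i * (u i + w i) + (1 / 2) * h i * (u i + w i) ^ 2))
        + (1 / 2) * lam * (∑ i, (αstar i + v i) * (u i + w i))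
      = ((∑ i, (g i * u i + (1 / 2) * h i * u i ^ 2))
          + (1 / 2) * lam * (∑ i, αstar i * u i))
        + ((∑ i, (1 / 2) * h i * w i ^ 2) + (1 / 2) * lam * (∑ i, v i * w i)) := by
    have hcongr := Finset.sum_congr rfl (fun i (_ : i ∈ Finset.univ) => pointwise i)
    calc (∑ i, (g i * (u i + w i) + (1 / 2) * h i * (u i + w i) ^ 2))
          + (1 / 2) * lam * (∑ i, (αstar i + v i) * (u i + w i))
        = ∑ i, ((g i * (u i + w i) + (1 / 2) * h i * (u i + w i) ^ 2)
            + (1 / 2) * lam * ((αstar i + v i) * (u i + w i))) := by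
          rw [Finset.mul_sum, ← Finset.sum_add_distrib]
      _ = ∑ i, (((g i * u i + (1 / 2) * h i * u i ^ 2) + (1 / 2) * lam * (αstar i * u i))
            + (((1 / 2) * h i * w i ^ 2) + (1 / 2) * lam * (v i * w i))
            + (w i * (g i + h i * u i + lam * αstar i))
            + (1 / 2) * lam * (v i * u i - αstar i * w i)) := hcongr
      _ = ((∑ i, (g i * u i + (1 / 2) * h i * u i ^ 2))
            + (1 / 2) * lam * (∑ i, αstar i * u i))
          + ((∑ i, (1 / 2) * h i * w i ^ 2) + (1 / 2) * lam * (∑ i, v i * w i)) := by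
          simp only [Finset.sum_add_distrib]
          rw [Szero,
            show (∑ i, (1 / 2) * lam * (v i * u i - αstar i * w i))
              = (1 / 2) * lam * ∑ i, (v i * u i - αstar i * w i) from
              (Finset.mul_sum _ _ _).symm, hsw,
            show (∑ i, (1 / 2) * lam * (αstar i * u i))
              = (1 / 2) * lam * ∑ i, αstar i * u i from (Finset.mul_sum _ _ _).symm,
            show (∑ i, (1 / 2) * lam * (v i * w i))
              = (1 / 2) * lam * ∑ i, v i * w i from (Finset.mul_sum _ _ _).symm]
          ring
  -- conclude
  rw [hQ β, hQ αstar, hKv, ← hu]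
  simp only []
  have e1 : β ⬝ᵥ (fun i => u i + w i) = ∑ i, (αstar i + v i) * (u i + w i) := by
    rw [hβ]
    simp [dotProduct]
  have e2 : αstar ⬝ᵥ u = ∑ i, αstar i * u i := rfl
  rw [e1, e2, main]
  have c1 : (0:ℝ) ≤ (1 / 2) * lam * ∑ i, v i * w i :=
    mul_nonneg (by linarith) hvw
  linarith [hsum, c1]
end

section
/- Let n be a positive integer, K an n×n real symmetric positive semidefinite matrix, λ > 0, and g ∈ ℝⁿ. Then α* = (K + λ I_n)⁻¹ (−g) is a global minimizer over α ∈ ℝⁿ of the gradient-boosting objective Q(α) = Σ_{i=1}^n [ g_i (Kα)_i + (1/2) (Kα)_i² ] + (1/2) λ αᵀ K α. -/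
open Matrix BigOperators

/-- Gradient boosting version of the kernel update in KTBoost: `α* = (K + λI)⁻¹(−g)`
globally minimizes `Q(α) = ∑ᵢ [gᵢ (Kα)ᵢ + (1/2)(Kα)ᵢ²] + (1/2) λ αᵀKα`. -/
theorem ktboost_gradient_kernel_update (n : ℕ) (hn : 0 < n)
    (K : Matrix (Fin n) (Fin n) ℝ) (hK : K.PosSemidef)
    (lam : ℝ) (hlam : 0 < lam) (g : Fin n → ℝ)
    (Q : (Fin n → ℝ) → ℝ)
    (hQ : ∀ α, Q α =
      (∑ i, (g i * (K.mulVec α) i + (1 / 2) * (K.mulVec α) i ^ 2))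
        + (1 / 2) * lam * (α ⬝ᵥ K.mulVec α))
    (αstar : Fin n → ℝ)
    (hα : αstar = (K + lam • (1 : Matrix (Fin n) (Fin n) ℝ))⁻¹.mulVec (-g)) :
    ∀ β : Fin n → ℝ, Q αstar ≤ Q β := by
  intro β
  set M : Matrix (Fin n) (Fin n) ℝ := K + lam • (1 : Matrix (Fin n) (Fin n) ℝ) with hM
  -- lam • 1 is positive definite
  have hI : (lam • (1 : Matrix (Fin n) (Fin n) ℝ)).PosDef := by
    refine Matrix.posDef_iff_dotProduct_mulVec.mpr ⟨?_, ?_⟩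
    · simp [Matrix.IsHermitian, Matrix.conjTranspose_smul]
    · intro x hx
      have : star x ⬝ᵥ (lam • (1 : Matrix (Fin n) (Fin n) ℝ)).mulVec x
          = lam * (x ⬝ᵥ x) := by
        simp [Matrix.smul_mulVec, Matrix.one_mulVec, dotProduct_smul, star_trivial,
          smul_eq_mul]
      rw [this]
      have hpos : 0 < x ⬝ᵥ x := by
        have := Matrix.dotProduct_star_self_pos_iff (v := x) |>.2 hx
        simpa using this
      exact mul_pos hlam hpos
  have hMpd : M.PosDef := Matrix.PosDef.posSemidef_add hK hI
  have hMunit : IsUnit M.det := hMpd.det_pos.ne'.isUnit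
  -- M * αstar = -g
  have hMα : M.mulVec αstar = -g := by
    rw [hα, Matrix.mulVec_mulVec, Matrix.mul_nonsing_inv _ hMunit, Matrix.one_mulVec]
  have hzero : g + K.mulVec αstar + lam • αstar = 0 := by
    have : K.mulVec αstar + lam • αstar = -g := by
      have := hMα
      rwa [hM, Matrix.add_mulVec, Matrix.smul_mulVec, Matrix.one_mulVec] at this
    rw [add_assoc, this, add_neg_cancel]
  -- symmetry of K
  have hsym : ∀ x y : Fin n → ℝ, x ⬝ᵥ K.mulVec y = K.mulVec x ⬝ᵥ y := by
    intro x y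
    have hKt : K.transpose = K := by
      ext i j
      have := congrFun (congrFun hK.isHermitian i) j
      simpa using this
    rw [Matrix.dotProduct_mulVec, ← Matrix.mulVec_transpose, hKt]
  set d : Fin n → ℝ := β - αstar with hd
  have hβ : β = αstar + d := by simp [hd]
  -- rewrite sums as dot products
  have hsum : ∀ α : Fin n → ℝ,
      (∑ i, (g i * (K.mulVec α) i + (1 / 2) * (K.mulVec α) i ^ 2))
        = g ⬝ᵥ K.mulVec α + (1 / 2) * (K.mulVec α ⬝ᵥ K.mulVec α) := by
    intro α
    rw [Finset.sum_add_distrib]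
    congr 1
    simp [dotProduct, Finset.mul_sum, sq]
  -- main computation
  have key : Q β = Q αstar + ((1 / 2) * (K.mulVec d ⬝ᵥ K.mulVec d)
      + (1 / 2) * lam * (d ⬝ᵥ K.mulVec d)) := by
    rw [hQ, hQ, hsum, hsum, hβ]
    have e1 : K.mulVec (αstar + d) = K.mulVec αstar + K.mulVec d := Matrix.mulVec_add ..
    rw [e1]
    have e2 : d ⬝ᵥ K.mulVec αstar = αstar ⬝ᵥ K.mulVec d := by
      rw [hsym d αstar, dotProduct_comm]
    have e3 : K.mulVec αstar ⬝ᵥ K.mulVec d = K.mulVec d ⬝ᵥ K.mulVec αstar :=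
      dotProduct_comm _ _
    have hcross : g ⬝ᵥ K.mulVec d + K.mulVec αstar ⬝ᵥ K.mulVec d
        + lam * (αstar ⬝ᵥ K.mulVec d) = 0 := by
      have : (g + K.mulVec αstar + lam • αstar) ⬝ᵥ K.mulVec d = 0 := by
        rw [hzero]; simp
      simpa [add_dotProduct, smul_dotProduct, smul_eq_mul] using this
    simp only [dotProduct_add, add_dotProduct]
    nlinarith [hcross, e2, e3]
  have h1 : 0 ≤ K.mulVec d ⬝ᵥ K.mulVec d := by
    apply Finset.sum_nonneg
    intro i _
    exact mul_self_nonneg _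
  have h2 : 0 ≤ d ⬝ᵥ K.mulVec d := by
    have := hK.re_dotProduct_nonneg d
    simpa using this
  rw [key]
  nlinarith
end
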